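/- arXiv:1611.01540 — 4 statements merged into one kernel-verified Lean document; each statement's English description precedes it below -/
import Mathlib

section
/- If every sublevel set Ω_F(λ) = {θ ∈ ℝ^S : F(θ) ≤ λ} of a continuous function F : ℝ^S → ℝ is path-connected, then every strict local minimum of F is a global minimum. (θ is a strict local minimum if there is ε > 0 with F(θ') > F(θ) for all θ' ∈ B(θ,ε) \ {θ}.) -/
/-- If every sublevel set of a continuous `F : ℝ^S → ℝ` is (path-)connected, then every
strict local minimum of `F` is a global minimum. -/
theorem stmt0 {S : ℕ} (F : EuclideanSpace ℝ (Fin S) → ℝ) (hF : Continuous F)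
    (hconn : ∀ lam : ℝ, ∀ θ1 θ2 : EuclideanSpace ℝ (Fin S),
      F θ1 ≤ lam → F θ2 ≤ lam → JoinedIn {θ | F θ ≤ lam} θ1 θ2)
    (θ : EuclideanSpace ℝ (Fin S))
    (hmin : ∃ ε > 0, ∀ θ' : EuclideanSpace ℝ (Fin S), θ' ≠ θ → ‖θ' - θ‖ < ε → F θ < F θ') :
    ∀ θ' : EuclideanSpace ℝ (Fin S), F θ ≤ F θ' := by
  obtain ⟨ε, hε, hstrict⟩ := hmin
  by_contra h
  push_neg at h
  obtain ⟨θ', hlt⟩ := h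
  have hne : θ' ≠ θ := by
    intro hEq; rw [hEq] at hlt; exact lt_irrefl _ hlt
  obtain ⟨γ, hγ⟩ := hconn (F θ) θ' θ hlt.le le_rfl
  -- the set of times the extended path equals θ
  set A : Set ℝ := {t | t ∈ Set.Icc (0:ℝ) 1 ∧ γ.extend t = θ} with hA
  have hclosed : IsClosed A := by
    have : A = Set.Icc (0:ℝ) 1 ∩ (γ.extend ⁻¹' {θ}) := by
      ext t; simp [hA, Set.mem_inter_iff]
    rw [this]
    exact isClosed_Icc.inter (isClosed_singleton.preimage γ.continuous_extend)
  have h1A : (1:ℝ) ∈ A := ⟨by norm_num, by simp⟩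
  have hbdd : BddBelow A := ⟨0, fun t ht => ht.1.1⟩
  have hne' : A.Nonempty := ⟨1, h1A⟩
  have ht0 : sInf A ∈ A := hclosed.csInf_mem hne' hbdd
  set t0 := sInf A with ht0def
  have ht0pos : 0 < t0 := by
    rcases lt_or_eq_of_le ht0.1.1 with h | h
    · exact h
    · exfalso
      have : γ.extend 0 = θ := by rw [h]; exact ht0.2
      rw [Path.extend_zero] at this
      exact hne this
  -- continuity of extend at t0
  have hc := (γ.continuous_extend.tendsto t0)
  have hball : ∀ᶠ t in nhds t0, dist (γ.extend t) (γ.extend t0) < ε := by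
    have := Metric.tendsto_nhds.mp hc ε hε
    simpa using this
  obtain ⟨δ, hδ, hδball⟩ := Metric.eventually_nhds_iff.mp hball
  set t1 := max 0 (t0 - δ/2) with ht1def
  have ht1lt : t1 < t0 := by
    apply max_lt ht0pos
    linarith
  have ht1mem : t1 ∈ Set.Icc (0:ℝ) 1 := ⟨le_max_left _ _, le_trans ht1lt.le ht0.1.2⟩
  have ht1dist : dist t1 t0 < δ := by
    rw [Real.dist_eq, abs_sub_lt_iff]
    constructor
    · linarith
    · have : t0 - δ/2 ≤ t1 := le_max_right _ _
      linarith
  have hnear : dist (γ.extend t1) θ < ε := by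
    have := hδball ht1dist
    rwa [ht0.2] at this
  have hnethe : γ.extend t1 ≠ θ := by
    intro hEq
    have : t1 ∈ A := ⟨ht1mem, hEq⟩
    exact absurd (csInf_le hbdd this) (not_le.mpr ht1lt)
  have hstr := hstrict (γ.extend t1) hnethe (by rwa [← dist_eq_norm])
  have hle : F (γ.extend t1) ≤ F θ := by
    rw [Path.extend_apply γ ht1mem]
    exact hγ _
  exact absurd hle (not_le.mpr hstr)
end

section
/- Let w₁, w₂ be unit vectors in ℝ^n with angle α = arccos⟨w₁,w₂⟩ < π, let w_m = (w₁+w₂)/‖w₁+w₂‖ be their unit bisector, let X be a random vector in ℝ^n with covariance Σ_X = 𝔼[XXᵀ] of finite operator norm, and define [w₁,w₂]_Z = 𝔼[max(0,⟨X,w₁⟩)·max(0,⟨X,w₂⟩)] and ‖w‖_Z² = 𝔼[max(0,⟨X,w⟩)²]. Then ((1+cos α)/2)·‖w_m‖_Z² − 2‖Σ_X‖·((1−cos α)/2 + sin²α) ≤ [w₁,w₂]_Z ≤ ((1+cos α)/2)·‖w_m‖_Z². -/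
set_option maxHeartbeats 1000000


open MeasureTheory

lemma ptA (a b : ℝ) : max 0 a * max 0 b ≤ (max 0 (a + b)) ^ 2 / 4 := by
  rcases le_total a 0 with ha | ha <;> rcases le_total b 0 with hb | hb
  · simp [max_eq_left ha, max_eq_left hb]; positivity
  · rw [max_eq_left ha, zero_mul]; positivity
  · rw [max_eq_left hb, mul_zero]; positivity
  · rw [max_eq_right ha, max_eq_right hb, max_eq_right (by linarith)]
    nlinarith [sq_nonneg (a - b)]

lemma ptB (a b : ℝ) :
    (max 0 (a + b)) ^ 2 / 4 - max 0 a * max 0 b ≤ (a - b) ^ 2 / 4 := by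
  rcases le_total (a + b) 0 with hs | hs
  · rw [max_eq_left hs]
    have : 0 ≤ max 0 a * max 0 b := mul_nonneg (le_max_left _ _) (le_max_left _ _)
    nlinarith [sq_nonneg (a - b)]
  · rw [max_eq_right hs]
    rcases le_total a 0 with ha | ha
    · rw [max_eq_left ha, zero_mul]
      nlinarith
    · rcases le_total b 0 with hb | hb
      · rw [max_eq_left hb, mul_zero]
        nlinarith
      · rw [max_eq_right ha, max_eq_right hb]
        nlinarith [sq_nonneg (a - b)]

/-- Proposition 2 (local linearization of the ReLU kernel): with `c = cos α = ⟨w₁,w₂⟩`,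
`((1+c)/2)‖w_m‖_Z² − 2‖Σ_X‖((1−c)/2 + sin²α) ≤ [w₁,w₂]_Z ≤ ((1+c)/2)‖w_m‖_Z²`.
Here `C` plays the role of the operator norm of the covariance `Σ_X`. -/
theorem stmt2 {n : ℕ} {Ω : Type*} [MeasureSpace Ω]
    [IsProbabilityMeasure (volume : Measure Ω)]
    (X : Ω → EuclideanSpace ℝ (Fin n)) (hXm : Measurable X)
    (hX2 : Integrable (fun ω => ‖X ω‖ ^ 2))
    (C : ℝ)
    (hC : ∀ w : EuclideanSpace ℝ (Fin n), (∫ ω, (inner ℝ w (X ω) : ℝ) ^ 2) ≤ C * ‖w‖ ^ 2)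
    (w1 w2 : EuclideanSpace ℝ (Fin n)) (h1 : ‖w1‖ = 1) (h2 : ‖w2‖ = 1)
    (hangle : (-1 : ℝ) < (inner ℝ w1 w2 : ℝ)) :
    (1 + (inner ℝ w1 w2 : ℝ)) / 2 *
        (∫ ω, (max 0 (inner ℝ (‖w1 + w2‖⁻¹ • (w1 + w2)) (X ω) : ℝ)) ^ 2)
      - 2 * C * ((1 - (inner ℝ w1 w2 : ℝ)) / 2 + (1 - (inner ℝ w1 w2 : ℝ) ^ 2))
      ≤ (∫ ω, max 0 (inner ℝ w1 (X ω) : ℝ) * max 0 (inner ℝ w2 (X ω) : ℝ))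
    ∧ (∫ ω, max 0 (inner ℝ w1 (X ω) : ℝ) * max 0 (inner ℝ w2 (X ω) : ℝ))
      ≤ (1 + (inner ℝ w1 w2 : ℝ)) / 2 *
          (∫ ω, (max 0 (inner ℝ (‖w1 + w2‖⁻¹ • (w1 + w2)) (X ω) : ℝ)) ^ 2) := by
  set c : ℝ := (inner ℝ w1 w2 : ℝ) with hc
  have hc1 : c ≤ 1 := by
    have := real_inner_le_norm w1 w2
    rw [h1, h2] at this; simpa using this
  have hnorm : ‖w1 + w2‖ ^ 2 = 2 + 2 * c := by
    rw [norm_add_sq_real, h1, h2]; ring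
  have hpos : (0 : ℝ) < 2 + 2 * c := by linarith
  have hne : ‖w1 + w2‖ ≠ 0 := by
    intro h; rw [h] at hnorm; simp at hnorm; linarith
  have hnpos : 0 < ‖w1 + w2‖ := lt_of_le_of_ne (norm_nonneg _) (Ne.symm hne)
  -- measurability of inner products
  have hia : ∀ w : EuclideanSpace ℝ (Fin n),
      Measurable fun ω => (inner ℝ w (X ω) : ℝ) := fun w =>
    ((continuous_const.inner continuous_id).measurable).comp hXm
  -- key pointwise identity
  have hkey : ∀ ω, (1 + c) / 2 *
      (max 0 (inner ℝ (‖w1 + w2‖⁻¹ • (w1 + w2)) (X ω) : ℝ)) ^ 2 =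
      (max 0 ((inner ℝ w1 (X ω) : ℝ) + (inner ℝ w2 (X ω) : ℝ))) ^ 2 / 4 := by
    intro ω
    rw [real_inner_smul_left, inner_add_left]
    have ht : (0 : ℝ) ≤ ‖w1 + w2‖⁻¹ := by positivity
    rw [show max 0 (‖w1 + w2‖⁻¹ * ((inner ℝ w1 (X ω) : ℝ) + (inner ℝ w2 (X ω) : ℝ)))
        = ‖w1 + w2‖⁻¹ * max 0 ((inner ℝ w1 (X ω) : ℝ) + (inner ℝ w2 (X ω) : ℝ)) by
      rw [mul_max_of_nonneg _ _ ht, mul_zero]]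
    rw [mul_pow]
    have hsq : (‖w1 + w2‖⁻¹) ^ 2 = (2 + 2 * c)⁻¹ := by
      rw [inv_pow, hnorm]
    rw [hsq]
    have h1c : (1 + c) ≠ 0 := by linarith
    field_simp
    ring
  -- integrability
  have habs : ∀ (w : EuclideanSpace ℝ (Fin n)) ω, |(inner ℝ w (X ω) : ℝ)| ≤ ‖w‖ * ‖X ω‖ :=
    fun w ω => abs_real_inner_le_norm w (X ω)
  have hf_int : Integrable (fun ω => max 0 (inner ℝ w1 (X ω) : ℝ) * max 0 (inner ℝ w2 (X ω) : ℝ)) := by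
    apply Integrable.mono' hX2
    · exact ((measurable_const.max (hia w1)).mul (measurable_const.max (hia w2))).aestronglyMeasurable
    · filter_upwards with ω
      have ha := habs w1 ω; have hb := habs w2 ω
      rw [h1, one_mul] at ha; rw [h2, one_mul] at hb
      have h0a : (0:ℝ) ≤ max 0 (inner ℝ w1 (X ω) : ℝ) := le_max_left _ _
      have h0b : (0:ℝ) ≤ max 0 (inner ℝ w2 (X ω) : ℝ) := le_max_left _ _
      rw [Real.norm_eq_abs, abs_of_nonneg (mul_nonneg h0a h0b)]
      have hma : max 0 (inner ℝ w1 (X ω) : ℝ) ≤ ‖X ω‖ := by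
        apply max_le (norm_nonneg _)
        exact le_trans (le_abs_self _) ha
      have hmb : max 0 (inner ℝ w2 (X ω) : ℝ) ≤ ‖X ω‖ := by
        apply max_le (norm_nonneg _)
        exact le_trans (le_abs_self _) hb
      calc max 0 (inner ℝ w1 (X ω) : ℝ) * max 0 (inner ℝ w2 (X ω) : ℝ)
          ≤ ‖X ω‖ * ‖X ω‖ := mul_le_mul hma hmb h0b (norm_nonneg _)
        _ = ‖X ω‖ ^ 2 := (sq ‖X ω‖).symm
  have hsum_bound : ∀ ω,
      (max 0 ((inner ℝ w1 (X ω) : ℝ) + (inner ℝ w2 (X ω) : ℝ))) ^ 2 / 4 ≤ ‖X ω‖ ^ 2 := by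
    intro ω
    have ha := habs w1 ω; have hb := habs w2 ω
    rw [h1, one_mul] at ha; rw [h2, one_mul] at hb
    have : max 0 ((inner ℝ w1 (X ω) : ℝ) + (inner ℝ w2 (X ω) : ℝ)) ≤ 2 * ‖X ω‖ := by
      apply max_le (by positivity)
      have := le_trans (le_abs_self _) (abs_add_le (inner ℝ w1 (X ω) : ℝ) (inner ℝ w2 (X ω) : ℝ))
      linarith
    nlinarith [le_max_left (0:ℝ) ((inner ℝ w1 (X ω) : ℝ) + (inner ℝ w2 (X ω) : ℝ)), norm_nonneg (X ω)]
  have hh_int : Integrable (fun ω =>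
      (max 0 ((inner ℝ w1 (X ω) : ℝ) + (inner ℝ w2 (X ω) : ℝ))) ^ 2 / 4) := by
    apply Integrable.mono' hX2
    · exact (((measurable_const.max ((hia w1).add (hia w2))).pow_const 2).div_const 4).aestronglyMeasurable
    · filter_upwards with ω
      rw [Real.norm_eq_abs, abs_of_nonneg (by positivity)]
      exact hsum_bound ω
  have hq_int : Integrable (fun ω =>
      ((inner ℝ w1 (X ω) : ℝ) - (inner ℝ w2 (X ω) : ℝ)) ^ 2 / 4) := by
    apply Integrable.mono' hX2
    · exact (((((hia w1).sub (hia w2)).pow_const 2)).div_const 4).aestronglyMeasurable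
    · filter_upwards with ω
      have ha := habs w1 ω; have hb := habs w2 ω
      rw [h1, one_mul] at ha; rw [h2, one_mul] at hb
      rw [Real.norm_eq_abs, abs_of_nonneg (by positivity)]
      have : |(inner ℝ w1 (X ω) : ℝ) - (inner ℝ w2 (X ω) : ℝ)| ≤ 2 * ‖X ω‖ := by
        have := abs_sub (inner ℝ w1 (X ω) : ℝ) (inner ℝ w2 (X ω) : ℝ)
        calc |(inner ℝ w1 (X ω) : ℝ) - (inner ℝ w2 (X ω) : ℝ)|
            ≤ |(inner ℝ w1 (X ω) : ℝ)| + |(inner ℝ w2 (X ω) : ℝ)| := abs_sub _ _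
          _ ≤ 2 * ‖X ω‖ := by linarith
      nlinarith [abs_nonneg ((inner ℝ w1 (X ω) : ℝ) - (inner ℝ w2 (X ω) : ℝ)), sq_abs ((inner ℝ w1 (X ω) : ℝ) - (inner ℝ w2 (X ω) : ℝ)), norm_nonneg (X ω)]
  -- rewrite the scaled integral
  have hrw : (1 + c) / 2 *
      (∫ ω, (max 0 (inner ℝ (‖w1 + w2‖⁻¹ • (w1 + w2)) (X ω) : ℝ)) ^ 2)
      = ∫ ω, (max 0 ((inner ℝ w1 (X ω) : ℝ) + (inner ℝ w2 (X ω) : ℝ))) ^ 2 / 4 := by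
    rw [← integral_const_mul]
    exact integral_congr_ae (Filter.Eventually.of_forall hkey)
  -- upper bound
  have hupper : (∫ ω, max 0 (inner ℝ w1 (X ω) : ℝ) * max 0 (inner ℝ w2 (X ω) : ℝ))
      ≤ (1 + c) / 2 *
        (∫ ω, (max 0 (inner ℝ (‖w1 + w2‖⁻¹ • (w1 + w2)) (X ω) : ℝ)) ^ 2) := by
    rw [hrw]
    exact integral_mono hf_int hh_int (fun ω => ptA _ _)
  -- lower bound
  have hCpos : 0 ≤ C := by
    have h := hC w1
    rw [h1] at h
    have h0 : 0 ≤ ∫ ω, (inner ℝ w1 (X ω) : ℝ) ^ 2 :=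
      integral_nonneg (fun ω => sq_nonneg _)
    simpa using le_trans h0 h
  have hdiff : (1 + c) / 2 *
      (∫ ω, (max 0 (inner ℝ (‖w1 + w2‖⁻¹ • (w1 + w2)) (X ω) : ℝ)) ^ 2)
      - (∫ ω, max 0 (inner ℝ w1 (X ω) : ℝ) * max 0 (inner ℝ w2 (X ω) : ℝ))
      ≤ C * (1 - c) / 2 := by
    rw [hrw, ← integral_sub hh_int hf_int]
    have step1 : (∫ ω, ((max 0 ((inner ℝ w1 (X ω) : ℝ) + (inner ℝ w2 (X ω) : ℝ))) ^ 2 / 4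
        - max 0 (inner ℝ w1 (X ω) : ℝ) * max 0 (inner ℝ w2 (X ω) : ℝ)))
        ≤ ∫ ω, ((inner ℝ w1 (X ω) : ℝ) - (inner ℝ w2 (X ω) : ℝ)) ^ 2 / 4 :=
      integral_mono (hh_int.sub hf_int) hq_int (fun ω => ptB _ _)
    have hsub : ∀ ω, (inner ℝ w1 (X ω) : ℝ) - (inner ℝ w2 (X ω) : ℝ)
        = (inner ℝ (w1 - w2) (X ω) : ℝ) := fun ω => (inner_sub_left _ _ _).symm
    have step2 : (∫ ω, ((inner ℝ w1 (X ω) : ℝ) - (inner ℝ w2 (X ω) : ℝ)) ^ 2 / 4)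
        = (∫ ω, (inner ℝ (w1 - w2) (X ω) : ℝ) ^ 2) / 4 := by
      simp_rw [hsub]
      exact integral_div _ _
    have hnsub : ‖w1 - w2‖ ^ 2 = 2 - 2 * c := by
      rw [norm_sub_sq_real, h1, h2]; ring
    have step3 : (∫ ω, (inner ℝ (w1 - w2) (X ω) : ℝ) ^ 2) ≤ C * (2 - 2 * c) := by
      have := hC (w1 - w2)
      rwa [hnsub] at this
    calc (∫ ω, ((max 0 ((inner ℝ w1 (X ω) : ℝ) + (inner ℝ w2 (X ω) : ℝ))) ^ 2 / 4
        - max 0 (inner ℝ w1 (X ω) : ℝ) * max 0 (inner ℝ w2 (X ω) : ℝ)))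
        ≤ (∫ ω, (inner ℝ (w1 - w2) (X ω) : ℝ) ^ 2) / 4 := by rw [← step2]; exact step1
      _ ≤ C * (2 - 2 * c) / 4 := by linarith
      _ = C * (1 - c) / 2 := by ring
  constructor
  · have hfinal : C * (1 - c) / 2 ≤ 2 * C * ((1 - c) / 2 + (1 - c ^ 2)) := by
      nlinarith [mul_nonneg hCpos (sub_nonneg.mpr hc1), mul_nonneg hCpos (by nlinarith : (0:ℝ) ≤ 1 - c ^ 2)]
    linarith
  · exact hupper
end

section
/- Let X be a random vector in ℝ^n with 𝔼‖X‖² < ∞, and let w₁, w₂ be unit vectors with angle α between them. Then the random variable n = max(0,⟨X,w₂⟩) − max(0,⟨X,w₁⟩) satisfies 𝔼[n²] ≤ 2‖Σ_X‖·(1 − cos α) + 2‖Σ_X‖·sin²α, i.e. the ReLU features of nearby directions are close in L². -/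
open MeasureTheory

/-- ReLU features of nearby directions are close in `L²`:
`𝔼[(z(w₂) − z(w₁))²] ≤ 2‖Σ_X‖(1 − cos α) + 2‖Σ_X‖ sin²α`, with `cos α = ⟨w₁,w₂⟩` and
`C` the operator-norm bound of the covariance `Σ_X`. -/
theorem stmt4 {n : ℕ} {Ω : Type*} [MeasureSpace Ω]
    [IsProbabilityMeasure (volume : Measure Ω)]
    (X : Ω → EuclideanSpace ℝ (Fin n)) (hXm : Measurable X)
    (hX2 : Integrable (fun ω => ‖X ω‖ ^ 2))
    (C : ℝ)
    (hC : ∀ w : EuclideanSpace ℝ (Fin n), (∫ ω, (inner ℝ w (X ω) : ℝ) ^ 2) ≤ C * ‖w‖ ^ 2)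
    (w1 w2 : EuclideanSpace ℝ (Fin n)) (h1 : ‖w1‖ = 1) (h2 : ‖w2‖ = 1) :
    (∫ ω, (max 0 (inner ℝ w2 (X ω) : ℝ) - max 0 (inner ℝ w1 (X ω) : ℝ)) ^ 2)
      ≤ 2 * C * (1 - (inner ℝ w1 w2 : ℝ)) + 2 * C * (1 - (inner ℝ w1 w2 : ℝ) ^ 2) := by
  have hC0 : 0 ≤ C := by
    have h := hC w1
    rw [h1] at h
    have h0 : 0 ≤ ∫ ω, (inner ℝ w1 (X ω) : ℝ) ^ 2 :=
      integral_nonneg fun ω => sq_nonneg _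
    nlinarith
  have hcs : |(inner ℝ w1 w2 : ℝ)| ≤ 1 := by
    have := abs_real_inner_le_norm w1 w2
    simpa [h1, h2] using this
  set v := w2 - w1 with hv
  have hvn : ‖v‖ ^ 2 = 2 - 2 * (inner ℝ w1 w2 : ℝ) := by
    have := @norm_sub_sq_real (EuclideanSpace ℝ (Fin n)) _ _ w2 w1
    have hsym : (inner ℝ w2 w1 : ℝ) = inner ℝ w1 w2 := real_inner_comm _ _
    simp only [hv]
    nlinarith [this]
  -- measurability of inner ℝ products
  have hmeas : ∀ w : EuclideanSpace ℝ (Fin n),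
      Measurable (fun ω => (inner ℝ w (X ω) : ℝ)) := fun w =>
    (innerSL ℝ w).continuous.measurable.comp hXm
  -- integrability of the dominating function
  have hg : Integrable (fun ω => (inner ℝ v (X ω) : ℝ) ^ 2) := by
    refine Integrable.mono' (hX2.const_mul (‖v‖ ^ 2)) (((hmeas v).pow_const 2).aestronglyMeasurable) ?_
    refine Filter.Eventually.of_forall fun ω => ?_
    have h := abs_real_inner_le_norm v (X ω)
    have hnn : (0:ℝ) ≤ ‖v‖ * ‖X ω‖ := by positivity
    rw [Real.norm_eq_abs, abs_of_nonneg (sq_nonneg _)]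
    calc (inner ℝ v (X ω) : ℝ) ^ 2 = |(inner ℝ v (X ω) : ℝ)| ^ 2 := (sq_abs _).symm
      _ ≤ (‖v‖ * ‖X ω‖) ^ 2 := by exact pow_le_pow_left₀ (abs_nonneg _) h 2
      _ = ‖v‖ ^ 2 * ‖X ω‖ ^ 2 := by ring
  -- pointwise bound
  have hfg : ∀ ω, (max 0 (inner ℝ w2 (X ω) : ℝ) - max 0 (inner ℝ w1 (X ω) : ℝ)) ^ 2
      ≤ (inner ℝ v (X ω) : ℝ) ^ 2 := by
    intro ω
    have h := abs_max_sub_max_le_abs (inner ℝ w2 (X ω) : ℝ) (inner ℝ w1 (X ω)) 0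
    have hd : (inner ℝ w2 (X ω) : ℝ) - inner ℝ w1 (X ω) = inner ℝ v (X ω) := by
      simp [hv, inner_sub_left]
    calc (max 0 (inner ℝ w2 (X ω) : ℝ) - max 0 (inner ℝ w1 (X ω) : ℝ)) ^ 2
        = |max (inner ℝ w2 (X ω) : ℝ) 0 - max (inner ℝ w1 (X ω) : ℝ) 0| ^ 2 := by
          rw [sq_abs, max_comm, max_comm (inner ℝ w1 (X ω) : ℝ) 0]
      _ ≤ |(inner ℝ w2 (X ω) : ℝ) - inner ℝ w1 (X ω)| ^ 2 :=
          pow_le_pow_left₀ (abs_nonneg _) h 2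
      _ = (inner ℝ v (X ω) : ℝ) ^ 2 := by rw [sq_abs, hd]
  have hf : Integrable (fun ω => (max 0 (inner ℝ w2 (X ω) : ℝ) - max 0 (inner ℝ w1 (X ω) : ℝ)) ^ 2) := by
    refine Integrable.mono' hg ?_ (Filter.Eventually.of_forall fun ω => ?_)
    · exact (((measurable_const.max (hmeas w2)).sub (measurable_const.max (hmeas w1))).pow_const 2).aestronglyMeasurable
    · rw [Real.norm_eq_abs, abs_of_nonneg (sq_nonneg _)]; exact hfg ω
  have hint : (∫ ω, (max 0 (inner ℝ w2 (X ω) : ℝ) - max 0 (inner ℝ w1 (X ω) : ℝ)) ^ 2)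
      ≤ ∫ ω, (inner ℝ v (X ω) : ℝ) ^ 2 := integral_mono hf hg hfg
  have hCv := hC v
  have hsq : 0 ≤ 1 - (inner ℝ w1 w2 : ℝ) ^ 2 := by
    nlinarith [sq_abs (inner ℝ w1 w2 : ℝ), abs_nonneg (inner ℝ w1 w2 : ℝ), hcs]
  nlinarith [mul_nonneg hC0 hsq]
end

section
/- Pruning bound: fix first-layer weights w₁, …, w_m (unit vectors in ℝ^n) and suppose ‖w_k − w_{k−1}‖ ≤ ε. Let β' minimize E(β) = 𝔼|Y − Σ_j β_j max(0,⟨w_j,X⟩)|² + κ‖β‖₁ and define β_p by merging coefficient β'_k into β'_{k−1} (i.e., (β_p)_{k−1} = β'_{k−1} + β'_k, (β_p)_k = 0, other entries unchanged). Then ‖β_p‖₁ ≤ ‖β'‖₁ and E(β_p) − E(β') ≤ C·ε for a constant C depending only on 𝔼|Y|², ‖Σ_X‖, and κ. -/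
open MeasureTheory

lemma aux_integrable_mul {Ω : Type*} [MeasureSpace Ω] {f g : Ω → ℝ}
    (hfm : AEStronglyMeasurable f volume) (hgm : AEStronglyMeasurable g volume)
    (hf : Integrable (fun ω => f ω ^ 2)) (hg : Integrable (fun ω => g ω ^ 2)) :
    Integrable (fun ω => f ω * g ω) := by
  have hdom : Integrable (fun ω => (f ω ^ 2 + g ω ^ 2) / 2) volume := (hf.add hg).div_const 2
  refine hdom.mono' (hfm.mul hgm) (ae_of_all _ fun ω => ?_)
  rw [Real.norm_eq_abs, abs_mul]
  nlinarith [sq_nonneg (|f ω| - |g ω|), sq_abs (f ω), sq_abs (g ω), abs_nonneg (f ω),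
    abs_nonneg (g ω)]

lemma aux_cs {Ω : Type*} [MeasureSpace Ω] {f g : Ω → ℝ}
    (hfm : AEStronglyMeasurable f volume) (hgm : AEStronglyMeasurable g volume)
    (hf : Integrable (fun ω => f ω ^ 2)) (hg : Integrable (fun ω => g ω ^ 2)) :
    |∫ ω, f ω * g ω| ≤ Real.sqrt (∫ ω, f ω ^ 2) * Real.sqrt (∫ ω, g ω ^ 2) := by
  have hfg := aux_integrable_mul hfm hgm hf hg
  set A := ∫ ω, f ω ^ 2 with hA'
  set Bq := ∫ ω, g ω ^ 2 with hBq'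
  set I := ∫ ω, f ω * g ω with hI'
  have hA : 0 ≤ A := integral_nonneg fun ω => sq_nonneg _
  have hBq : 0 ≤ Bq := integral_nonneg fun ω => sq_nonneg _
  have hq : ∀ t : ℝ, 0 ≤ A - 2 * t * I + t ^ 2 * Bq := by
    intro t
    have h0 : 0 ≤ ∫ ω, (f ω - t * g ω) ^ 2 := integral_nonneg fun ω => sq_nonneg _
    have he : (∫ ω, (f ω - t * g ω) ^ 2) = A - 2 * t * I + t ^ 2 * Bq := by
      have hfun : (fun ω => (f ω - t * g ω) ^ 2)
          = fun ω => (f ω ^ 2 - 2 * t * (f ω * g ω)) + t ^ 2 * g ω ^ 2 :=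
        funext fun ω => by ring
      have i2 : Integrable (fun ω => 2 * t * (f ω * g ω)) volume := hfg.const_mul (2 * t)
      have i1 : Integrable (fun ω => f ω ^ 2 - 2 * t * (f ω * g ω)) volume := hf.sub i2
      have i3 : Integrable (fun ω => t ^ 2 * g ω ^ 2) volume := hg.const_mul _
      rw [hfun, integral_add i1 i3, integral_sub hf i2, integral_const_mul, integral_const_mul]
    linarith [he ▸ h0]
  have key : I ^ 2 ≤ A * Bq := by
    rcases eq_or_lt_of_le hBq with h0 | hpos
    · have hI0 : I = 0 := by
        by_contra hI
        have h1 := hq ((A + 1) / (2 * I))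
        rw [← h0] at h1
        have h2 : 2 * ((A + 1) / (2 * I)) * I = A + 1 := by field_simp
        nlinarith [h1, h2]
      rw [hI0, ← h0]
      simp
    · have hne : Bq ≠ 0 := ne_of_gt hpos
      have h5 : (A - 2 * (I / Bq) * I + (I / Bq) ^ 2 * Bq) * Bq = A * Bq - I ^ 2 := by
        field_simp; ring
      have h6 : 0 ≤ A * Bq - I ^ 2 := by rw [← h5]; exact mul_nonneg (hq _) hpos.le
      linarith
  calc |I| ≤ Real.sqrt (A * Bq) := Real.abs_le_sqrt key
    _ = Real.sqrt A * Real.sqrt Bq := Real.sqrt_mul hA _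

set_option maxHeartbeats 1000000 in
/-- Pruning bound: merging the coefficient of a ReLU unit `w k` into that of a nearby unit
`w k'` (with `‖w k − w k'‖ ≤ ε`) does not increase the `ℓ¹` norm of the second layer and
increases the regularized risk of the minimizer `β'` by at most `C·ε`, where `C` depends only
on `𝔼|Y|²`, the covariance bound `B` (for `‖Σ_X‖`) and `κ`. -/
theorem stmt16 {n : ℕ} {Ω : Type*} [MeasureSpace Ω]
    [IsProbabilityMeasure (volume : Measure Ω)]
    (X : Ω → EuclideanSpace ℝ (Fin n)) (Y : Ω → ℝ) (hXm : Measurable X) (hYm : Measurable Y)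
    (hX2 : Integrable (fun ω => ‖X ω‖ ^ 2)) (hY2 : Integrable (fun ω => (Y ω) ^ 2))
    (B : ℝ)
    (hB : ∀ v : EuclideanSpace ℝ (Fin n), (∫ ω, (inner ℝ v (X ω) : ℝ) ^ 2) ≤ B * ‖v‖ ^ 2)
    (κ : ℝ) (hκ : 0 < κ) :
    ∃ C : ℝ, ∀ (m : ℕ) (w : Fin m → EuclideanSpace ℝ (Fin n)), (∀ i, ‖w i‖ = 1) →
      ∀ k k' : Fin m, k ≠ k' → ∀ ε : ℝ, ‖w k - w k'‖ ≤ ε →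
      ∀ β' : Fin m → ℝ,
        (∀ β : Fin m → ℝ,
          (∫ ω, (Y ω - ∑ j, β' j * max 0 (inner ℝ (w j) (X ω) : ℝ)) ^ 2) + κ * ∑ j, |β' j|
            ≤ (∫ ω, (Y ω - ∑ j, β j * max 0 (inner ℝ (w j) (X ω) : ℝ)) ^ 2)
                + κ * ∑ j, |β j|) →
        (∑ j, |Function.update (Function.update β' k' (β' k' + β' k)) k 0 j|
            ≤ ∑ j, |β' j|) ∧
        ((∫ ω, (Y ω - ∑ j,
              Function.update (Function.update β' k' (β' k' + β' k)) k 0 j *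
                max 0 (inner ℝ (w j) (X ω) : ℝ)) ^ 2)
            + κ * ∑ j, |Function.update (Function.update β' k' (β' k' + β' k)) k 0 j|)
          - ((∫ ω, (Y ω - ∑ j, β' j * max 0 (inner ℝ (w j) (X ω) : ℝ)) ^ 2)
              + κ * ∑ j, |β' j|)
          ≤ C * ε := by
  obtain ⟨S, hS⟩ : ∃ S : ℝ, S = ∫ ω, (Y ω) ^ 2 := ⟨_, rfl⟩
  have hSnn : 0 ≤ S := hS ▸ integral_nonneg fun ω => sq_nonneg _
  refine ⟨2 * (S / κ) ^ 2 * max B 0 + 2 * Real.sqrt S * ((S / κ) * Real.sqrt (max B 0)), ?_⟩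
  intro m w hw k k' hkk ε hε β' hmin
  set βp := Function.update (Function.update β' k' (β' k' + β' k)) k 0 with hβp
  have hε0 : 0 ≤ ε := le_trans (norm_nonneg _) hε
  -- values of βp
  have hpk : βp k = 0 := Function.update_self _ _ _
  have hpk' : βp k' = β' k' + β' k := by
    rw [hβp, Function.update_of_ne (Ne.symm hkk), Function.update_self]
  have hpj : ∀ j, j ≠ k → j ≠ k' → βp j = β' j := fun j h1 h2 => by
    rw [hβp, Function.update_of_ne h1, Function.update_of_ne h2]
  -- splitting sums over Fin m
  have e1 : ∀ g : Fin m → ℝ,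
      ∑ j, g j = g k + g k' + ∑ j ∈ (Finset.univ.erase k).erase k', g j := by
    intro g
    rw [← Finset.add_sum_erase _ g (Finset.mem_univ k),
      ← Finset.add_sum_erase _ g (Finset.mem_erase.2 ⟨Ne.symm hkk, Finset.mem_univ k'⟩)]
    ring
  -- Part A : ℓ¹ bound
  have hA : ∑ j, |βp j| ≤ ∑ j, |β' j| := by
    have h1 := e1 (fun j => |βp j|)
    have h2 := e1 (fun j => |β' j|)
    have h3 : ∑ j ∈ (Finset.univ.erase k).erase k', |βp j|
        = ∑ j ∈ (Finset.univ.erase k).erase k', |β' j| :=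
      Finset.sum_congr rfl fun j hj => by
        have hj1 := Finset.mem_erase.1 hj
        have hj2 := Finset.mem_erase.1 hj1.2
        rw [hpj j hj2.1 hj1.1]
    rw [h1, h2, hpk, hpk', h3]
    simp only [abs_zero]
    linarith [abs_add_le (β' k') (β' k)]
  refine ⟨hA, ?_⟩
  -- notation
  set d : Ω → ℝ := fun ω =>
    β' k * (max 0 (inner ℝ (w k') (X ω) : ℝ) - max 0 (inner ℝ (w k) (X ω) : ℝ)) with hd
  -- pointwise identity
  have hpt : ∀ ω, ∑ j, βp j * max 0 (inner ℝ (w j) (X ω) : ℝ)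
      = (∑ j, β' j * max 0 (inner ℝ (w j) (X ω) : ℝ)) + d ω := by
    intro ω
    have h1 := e1 (fun j => βp j * max 0 (inner ℝ (w j) (X ω) : ℝ))
    have h2 := e1 (fun j => β' j * max 0 (inner ℝ (w j) (X ω) : ℝ))
    have h3 : ∑ j ∈ (Finset.univ.erase k).erase k', βp j * max 0 (inner ℝ (w j) (X ω) : ℝ)
        = ∑ j ∈ (Finset.univ.erase k).erase k', β' j * max 0 (inner ℝ (w j) (X ω) : ℝ) :=
      Finset.sum_congr rfl fun j hj => by
        have hj1 := Finset.mem_erase.1 hj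
        have hj2 := Finset.mem_erase.1 hj1.2
        rw [hpj j hj2.1 hj1.1]
    rw [h1, h2, hpk, hpk', h3, hd]
    ring
  -- measurability and integrability
  have hRm : ∀ j : Fin m, Measurable fun ω => max 0 (inner ℝ (w j) (X ω) : ℝ) := fun j =>
    measurable_const.max (measurable_const.inner hXm)
  have hRb : ∀ (j : Fin m) ω, |max 0 (inner ℝ (w j) (X ω) : ℝ)| ≤ ‖X ω‖ := by
    intro j ω
    have h1 : |max 0 (inner ℝ (w j) (X ω) : ℝ)| ≤ |(inner ℝ (w j) (X ω) : ℝ)| := by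
      rw [abs_of_nonneg (le_max_left _ _)]
      exact max_le (abs_nonneg _) (le_abs_self _)
    refine h1.trans ?_
    have h2 := abs_real_inner_le_norm (w j) (X ω)
    rwa [hw j, one_mul] at h2
  have hmem : ∀ (h : Ω → ℝ) (c : ℝ), Measurable h → (∀ ω, |h ω| ≤ c * ‖X ω‖) →
      Integrable (fun ω => h ω ^ 2) := by
    intro h c hm hb
    refine (hX2.const_mul (c ^ 2)).mono' ((hm.pow_const 2).aestronglyMeasurable)
      (ae_of_all _ fun ω => ?_)
    have h1 := hb ω
    have h2 := abs_nonneg (h ω)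
    have h3 := norm_nonneg (X ω)
    rw [Real.norm_eq_abs, abs_pow]
    nlinarith [mul_self_le_mul_self h2 h1]
  have hgmeas : Measurable fun ω => ∑ j, β' j * max 0 (inner ℝ (w j) (X ω) : ℝ) :=
    Finset.measurable_sum _ fun j _ => (hRm j).const_mul _
  have hgb : ∀ ω, |∑ j, β' j * max 0 (inner ℝ (w j) (X ω) : ℝ)| ≤ (∑ j, |β' j|) * ‖X ω‖ := by
    intro ω
    calc |∑ j, β' j * max 0 (inner ℝ (w j) (X ω) : ℝ)|
        ≤ ∑ j, |β' j * max 0 (inner ℝ (w j) (X ω) : ℝ)| := Finset.abs_sum_le_sum_abs _ _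
      _ ≤ ∑ j, |β' j| * ‖X ω‖ := Finset.sum_le_sum fun j _ => by
          rw [abs_mul]
          exact mul_le_mul_of_nonneg_left (hRb j ω) (abs_nonneg _)
      _ = (∑ j, |β' j|) * ‖X ω‖ := (Finset.sum_mul _ _ _).symm
  have hg2 : Integrable fun ω => (∑ j, β' j * max 0 (inner ℝ (w j) (X ω) : ℝ)) ^ 2 :=
    hmem _ _ hgmeas hgb
  have hf'meas : Measurable fun ω => Y ω - ∑ j, β' j * max 0 (inner ℝ (w j) (X ω) : ℝ) :=
    hYm.sub hgmeas
  have hf'2 : Integrable fun ω => (Y ω - ∑ j, β' j * max 0 (inner ℝ (w j) (X ω) : ℝ)) ^ 2 := by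
    have hdom : Integrable (fun ω => 2 * (Y ω) ^ 2
        + 2 * (∑ j, β' j * max 0 (inner ℝ (w j) (X ω) : ℝ)) ^ 2) volume :=
      (hY2.const_mul 2).add (hg2.const_mul 2)
    refine hdom.mono'
      ((hf'meas.pow_const 2).aestronglyMeasurable) (ae_of_all _ fun ω => ?_)
    rw [Real.norm_eq_abs, abs_of_nonneg (sq_nonneg _)]
    nlinarith [sq_nonneg (Y ω + ∑ j, β' j * max 0 (inner ℝ (w j) (X ω) : ℝ))]
  have hdmeas : Measurable d := ((hRm k').sub (hRm k)).const_mul _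
  have hd2 : Integrable fun ω => d ω ^ 2 := by
    refine hmem d (2 * |β' k|) hdmeas fun ω => ?_
    have h1 := hRb k' ω
    have h2 := hRb k ω
    have h3 := abs_sub (max 0 (inner ℝ (w k') (X ω) : ℝ)) (max 0 (inner ℝ (w k) (X ω) : ℝ))
    rw [hd]
    simp only
    rw [abs_mul]
    nlinarith [abs_nonneg (β' k), norm_nonneg (X ω)]
  have hfd : Integrable fun ω =>
      (Y ω - ∑ j, β' j * max 0 (inner ℝ (w j) (X ω) : ℝ)) * d ω :=
    aux_integrable_mul hf'meas.aestronglyMeasurable hdmeas.aestronglyMeasurable hf'2 hd2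
  -- decomposition of the new risk
  have hIp : (∫ ω, (Y ω - ∑ j, βp j * max 0 (inner ℝ (w j) (X ω) : ℝ)) ^ 2)
      = (∫ ω, (Y ω - ∑ j, β' j * max 0 (inner ℝ (w j) (X ω) : ℝ)) ^ 2)
        - 2 * (∫ ω, (Y ω - ∑ j, β' j * max 0 (inner ℝ (w j) (X ω) : ℝ)) * d ω)
        + ∫ ω, d ω ^ 2 := by
    have hfun : (fun ω => (Y ω - ∑ j, βp j * max 0 (inner ℝ (w j) (X ω) : ℝ)) ^ 2)
        = fun ω => ((Y ω - ∑ j, β' j * max 0 (inner ℝ (w j) (X ω) : ℝ)) ^ 2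
            - 2 * ((Y ω - ∑ j, β' j * max 0 (inner ℝ (w j) (X ω) : ℝ)) * d ω)) + d ω ^ 2 :=
      funext fun ω => by rw [hpt ω]; ring
    have i2 : Integrable (fun ω =>
        2 * ((Y ω - ∑ j, β' j * max 0 (inner ℝ (w j) (X ω) : ℝ)) * d ω)) volume :=
      hfd.const_mul 2
    have i1 : Integrable (fun ω => (Y ω - ∑ j, β' j * max 0 (inner ℝ (w j) (X ω) : ℝ)) ^ 2
        - 2 * ((Y ω - ∑ j, β' j * max 0 (inner ℝ (w j) (X ω) : ℝ)) * d ω)) volume := hf'2.sub i2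
    rw [hfun, integral_add i1 hd2, integral_sub hf'2 i2, integral_const_mul]
  -- minimality consequences
  have hmin0 := hmin 0
  simp only [Pi.zero_apply, zero_mul, Finset.sum_const_zero, sub_zero, abs_zero,
    mul_zero, add_zero] at hmin0
  rw [← hS] at hmin0
  have hintnn : 0 ≤ ∫ ω, (Y ω - ∑ j, β' j * max 0 (inner ℝ (w j) (X ω) : ℝ)) ^ 2 :=
    integral_nonneg fun ω => sq_nonneg _
  have hl1nn : 0 ≤ ∑ j, |β' j| := Finset.sum_nonneg fun j _ => abs_nonneg _
  have hl1 : ∑ j, |β' j| ≤ S / κ := by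
    rw [le_div_iff₀ hκ]
    nlinarith
  have hbk : |β' k| ≤ S / κ :=
    le_trans (Finset.single_le_sum (fun j _ => abs_nonneg (β' j)) (Finset.mem_univ k)) hl1
  have hMnn : 0 ≤ S / κ := le_trans (abs_nonneg _) hbk
  have hf'S : (∫ ω, (Y ω - ∑ j, β' j * max 0 (inner ℝ (w j) (X ω) : ℝ)) ^ 2) ≤ S := by
    nlinarith
  -- bound on ∫ d²
  have hvint : Integrable fun ω => (inner ℝ (w k - w k') (X ω) : ℝ) ^ 2 :=
    hmem _ ‖w k - w k'‖ (measurable_const.inner hXm) fun ω => abs_real_inner_le_norm _ _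
  have hdb : ∀ ω, d ω ^ 2 ≤ (β' k) ^ 2 * (inner ℝ (w k - w k') (X ω) : ℝ) ^ 2 := by
    intro ω
    have hlip : |max 0 (inner ℝ (w k') (X ω) : ℝ) - max 0 (inner ℝ (w k) (X ω) : ℝ)|
        ≤ |(inner ℝ (w k') (X ω) : ℝ) - (inner ℝ (w k) (X ω) : ℝ)| := by
      rw [max_comm 0 (inner ℝ (w k') (X ω) : ℝ), max_comm 0 (inner ℝ (w k) (X ω) : ℝ)]
      exact abs_max_sub_max_le_abs _ _ _
    have h2 : ((inner ℝ (w k') (X ω) : ℝ) - (inner ℝ (w k) (X ω) : ℝ))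
        = -(inner ℝ (w k - w k') (X ω) : ℝ) := by
      rw [inner_sub_left]; ring
    rw [hd]
    simp only
    rw [mul_pow]
    have h3 : (max 0 (inner ℝ (w k') (X ω) : ℝ) - max 0 (inner ℝ (w k) (X ω) : ℝ)) ^ 2
        ≤ (inner ℝ (w k - w k') (X ω) : ℝ) ^ 2 := by
      rw [h2] at hlip
      rw [abs_neg] at hlip
      nlinarith [abs_nonneg (max 0 (inner ℝ (w k') (X ω) : ℝ) - max 0 (inner ℝ (w k) (X ω) : ℝ)),
        sq_abs (max 0 (inner ℝ (w k') (X ω) : ℝ) - max 0 (inner ℝ (w k) (X ω) : ℝ)),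
        sq_abs (inner ℝ (w k - w k') (X ω) : ℝ),
        mul_self_le_mul_self (abs_nonneg (max 0 (inner ℝ (w k') (X ω) : ℝ)
          - max 0 (inner ℝ (w k) (X ω) : ℝ))) hlip]
    exact mul_le_mul_of_nonneg_left h3 (sq_nonneg _)
  have hDnn : 0 ≤ ∫ ω, d ω ^ 2 := integral_nonneg fun ω => sq_nonneg _
  have hvnn : 0 ≤ ∫ ω, (inner ℝ (w k - w k') (X ω) : ℝ) ^ 2 :=
    integral_nonneg fun ω => sq_nonneg _
  have hB0 : (0 : ℝ) ≤ max B 0 := le_max_right _ _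
  have hD : (∫ ω, d ω ^ 2) ≤ (β' k) ^ 2 * (max B 0 * ‖w k - w k'‖ ^ 2) := by
    have h1 : (∫ ω, d ω ^ 2) ≤ ∫ ω, (β' k) ^ 2 * (inner ℝ (w k - w k') (X ω) : ℝ) ^ 2 :=
      integral_mono_of_nonneg (ae_of_all _ fun ω => sq_nonneg _) (hvint.const_mul _)
        (ae_of_all _ hdb)
    rw [integral_const_mul] at h1
    have h2 : (∫ ω, (inner ℝ (w k - w k') (X ω) : ℝ) ^ 2) ≤ max B 0 * ‖w k - w k'‖ ^ 2 :=
      le_trans (hB _) (mul_le_mul_of_nonneg_right (le_max_left B 0) (sq_nonneg _))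
    nlinarith [sq_nonneg (β' k)]
  -- Cauchy-Schwarz
  have hCS := aux_cs hf'meas.aestronglyMeasurable hdmeas.aestronglyMeasurable hf'2 hd2
  have hsS : (0:ℝ) ≤ Real.sqrt S := Real.sqrt_nonneg _
  have hsB0 : (0:ℝ) ≤ Real.sqrt (max B 0) := Real.sqrt_nonneg _
  have hsx : Real.sqrt (∫ ω, (Y ω - ∑ j, β' j * max 0 (inner ℝ (w j) (X ω) : ℝ)) ^ 2)
      ≤ Real.sqrt S := Real.sqrt_le_sqrt hf'S
  have hsd : Real.sqrt (∫ ω, d ω ^ 2)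
      ≤ |β' k| * (Real.sqrt (max B 0) * ‖w k - w k'‖) := by
    have heq : (β' k) ^ 2 * (max B 0 * ‖w k - w k'‖ ^ 2)
        = (|β' k| * (Real.sqrt (max B 0) * ‖w k - w k'‖)) ^ 2 := by
      rw [mul_pow, mul_pow, sq_abs, Real.sq_sqrt hB0]
    calc Real.sqrt (∫ ω, d ω ^ 2)
        ≤ Real.sqrt ((β' k) ^ 2 * (max B 0 * ‖w k - w k'‖ ^ 2)) := Real.sqrt_le_sqrt hD
      _ = |β' k| * (Real.sqrt (max B 0) * ‖w k - w k'‖) := by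
          rw [heq, Real.sqrt_sq (by positivity)]
  have hF : -(∫ ω, (Y ω - ∑ j, β' j * max 0 (inner ℝ (w j) (X ω) : ℝ)) * d ω)
      ≤ Real.sqrt S * (|β' k| * (Real.sqrt (max B 0) * ‖w k - w k'‖)) :=
    le_trans (neg_le_abs _)
      (hCS.trans (mul_le_mul hsx hsd (Real.sqrt_nonneg _) hsS))
  have ht2 : ‖w k - w k'‖ ≤ 2 :=
    le_trans (norm_sub_le _ _) (by rw [hw k, hw k']; norm_num)
  have ht0 : 0 ≤ ‖w k - w k'‖ := norm_nonneg _
  have hb2 : (β' k) ^ 2 ≤ (S / κ) ^ 2 := by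
    rw [← sq_abs]
    exact pow_le_pow_left₀ (abs_nonneg _) hbk 2
  have ht2e : ‖w k - w k'‖ ^ 2 ≤ 2 * ε := by
    calc ‖w k - w k'‖ ^ 2 = ‖w k - w k'‖ * ‖w k - w k'‖ := sq (‖w k - w k'‖) ▸ rfl
      _ ≤ 2 * ε := mul_le_mul ht2 hε ht0 (by norm_num)
  have hDfin : (∫ ω, d ω ^ 2) ≤ 2 * (S / κ) ^ 2 * max B 0 * ε := by
    calc (∫ ω, d ω ^ 2) ≤ (β' k) ^ 2 * (max B 0 * ‖w k - w k'‖ ^ 2) := hD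
      _ ≤ (S / κ) ^ 2 * (max B 0 * (2 * ε)) :=
          mul_le_mul hb2 (mul_le_mul_of_nonneg_left ht2e hB0) (by positivity) (sq_nonneg _)
      _ = 2 * (S / κ) ^ 2 * max B 0 * ε := by ring
  have hFfin : -(∫ ω, (Y ω - ∑ j, β' j * max 0 (inner ℝ (w j) (X ω) : ℝ)) * d ω)
      ≤ Real.sqrt S * ((S / κ) * Real.sqrt (max B 0)) * ε := by
    have h5 : |β' k| * ‖w k - w k'‖ ≤ (S / κ) * ε := mul_le_mul hbk hε ht0 hMnn
    have h6 := mul_le_mul_of_nonneg_left h5 (mul_nonneg hsS hsB0)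
    nlinarith [hF, h6]
  have hk1 : κ * ∑ j, |βp j| ≤ κ * ∑ j, |β' j| := mul_le_mul_of_nonneg_left hA hκ.le
  rw [hIp]
  linarith [hFfin, hDfin, hk1]
end
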